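/- Let d₀ > 2 be an integer. The number of plane rooted trees with s edges in which every vertex has at most d₀ children is at least (1 − (2s+1)·e^{−(d₀−2)ln(4/3)})·C(s), where C(s) is the s-th Catalan number. -/

import Mathlib

inductive PlaneTree : Type
  | node : List PlaneTree → PlaneTree

def PlaneTree.numEdges : PlaneTree → ℕ
  | .node cs => cs.length + (cs.attach.map (fun t => t.1.numEdges)).sum
decreasing_by
  have := List.sizeOf_lt_of_mem t.2
  simp only [PlaneTree.node.sizeOf_spec] at *
  omega

def PlaneTree.childrenLE (d : ℕ) : PlaneTree → Prop
  | .node cs => cs.length ≤ d ∧ ∀ t ∈ cs.attach, t.1.childrenLE d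
decreasing_by
  have := List.sizeOf_lt_of_mem t.2
  simp only [PlaneTree.node.sizeOf_spec] at *
  omega

lemma PlaneTree.numEdges_node (cs : List PlaneTree) :
    (PlaneTree.node cs).numEdges = cs.length + (cs.map PlaneTree.numEdges).sum := by
  rw [PlaneTree.numEdges]
  congr 1
  exact congrArg List.sum (List.attach_map_val (l := cs) (f := PlaneTree.numEdges))

lemma PlaneTree.childrenLE_node (d : ℕ) (cs : List PlaneTree) :
    (PlaneTree.node cs).childrenLE d ↔ cs.length ≤ d ∧ ∀ t ∈ cs, t.childrenLE d := by
  rw [PlaneTree.childrenLE]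
  refine and_congr Iff.rfl ⟨fun h x hx => h ⟨x, hx⟩ (List.mem_attach _ _), fun h x _ => h x.1 x.2⟩

/-- Łukasiewicz code of a forest. -/
def forestCode : List PlaneTree → List ℕ
  | [] => []
  | (.node ds) :: cs => ds.length :: (forestCode ds ++ forestCode cs)

lemma forestCode_length (cs : List PlaneTree) :
    (forestCode cs).length = (cs.map PlaneTree.numEdges).sum + cs.length := by
  induction cs using forestCode.induct with
  | case1 => simp [forestCode]
  | case2 ds cs ih1 ih2 =>
    simp [forestCode, ih1, ih2, PlaneTree.numEdges_node]
    omega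

lemma forestCode_sum (cs : List PlaneTree) :
    (forestCode cs).sum = (cs.map PlaneTree.numEdges).sum := by
  induction cs using forestCode.induct with
  | case1 => simp [forestCode]
  | case2 ds cs ih1 ih2 =>
    simp [forestCode, ih1, ih2, PlaneTree.numEdges_node]
    omega

lemma forestCode_append_inj : ∀ (cs cs' : List PlaneTree) (r r' : List ℕ),
    cs.length = cs'.length → forestCode cs ++ r = forestCode cs' ++ r' →
    cs = cs' ∧ r = r' := by
  intro cs
  induction cs using forestCode.induct with
  | case1 =>
    rintro (_ | ⟨c', cs'⟩) r r' hl he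
    · simpa [forestCode] using he
    · simp at hl
  | case2 ds cs ih1 ih2 =>
    rintro (_ | ⟨⟨ds'⟩, cs'⟩) r r' hl he
    · simp at hl
    · simp only [forestCode, List.cons_append, List.cons.injEq, List.append_assoc] at he
      obtain ⟨hlen, he⟩ := he
      obtain ⟨h1, h2⟩ := ih1 ds' _ _ hlen he
      obtain ⟨h3, h4⟩ := ih2 cs' _ _ (by simpa using hl) h2
      exact ⟨by rw [h1, h3], h4⟩

lemma forestCode_bounded (d : ℕ) (cs : List PlaneTree) :
    (∀ t ∈ cs, t.childrenLE d) ↔ ∀ a ∈ forestCode cs, a ≤ d := by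
  induction cs using forestCode.induct with
  | case1 => simp [forestCode]
  | case2 ds cs ih1 ih2 =>
    simp only [forestCode, List.mem_cons, List.mem_append, PlaneTree.childrenLE_node]
    constructor
    · intro h
      have h0 := h _ (Or.inl rfl)
      rw [PlaneTree.childrenLE_node] at h0
      rintro a (rfl | ha | ha)
      · exact h0.1
      · exact (ih1.1 h0.2) a ha
      · exact (ih2.1 fun t ht => h t (Or.inr ht)) a ha
    · rintro h t (rfl | ht)
      · rw [PlaneTree.childrenLE_node]
        exact ⟨h _ (Or.inl rfl), ih1.2 fun a ha => h a (Or.inr (Or.inl ha))⟩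
      · exact (ih2.2 fun a ha => h a (Or.inr (Or.inr ha))) t ht

/-- Rotation correspondence: forests of plane trees to binary trees. -/
def toBin : List PlaneTree → Tree Unit
  | [] => .nil
  | (.node ds) :: cs => .node () (toBin ds) (toBin cs)

def ofBin : Tree Unit → List PlaneTree
  | .nil => []
  | .node _ l r => .node (ofBin l) :: ofBin r

lemma toBin_ofBin : ∀ b, toBin (ofBin b) = b := by
  intro b
  induction b with
  | nil => simp [toBin, ofBin]
  | node v l r ihl ihr => simp [toBin, ofBin, ihl, ihr]

lemma ofBin_toBin : ∀ cs, ofBin (toBin cs) = cs := by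
  intro cs
  induction cs using toBin.induct with
  | case1 => simp [toBin, ofBin]
  | case2 ds cs ih1 ih2 => simp [toBin, ofBin, ih1, ih2]

lemma numNodes_toBin : ∀ cs, (toBin cs).numNodes = (cs.map PlaneTree.numEdges).sum + cs.length := by
  intro cs
  induction cs using toBin.induct with
  | case1 => simp [toBin]
  | case2 ds cs ih1 ih2 =>
    simp [toBin, Tree.numNodes, ih1, ih2, PlaneTree.numEdges_node]
    omega

lemma numNodes_toBin' (cs : List PlaneTree) :
    (toBin cs).numNodes = (PlaneTree.node cs).numEdges := by
  rw [numNodes_toBin, PlaneTree.numEdges_node]; omega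

lemma toBin_inj : Function.Injective toBin := by
  intro a b h
  rw [← ofBin_toBin a, ← ofBin_toBin b, h]

def treeEquivBin (s : ℕ) :
    {t : PlaneTree // t.numEdges = s} ≃ {b : Tree Unit // b.numNodes = s} where
  toFun t := ⟨toBin (match t.1 with | .node cs => cs), by
    obtain ⟨⟨cs⟩, ht⟩ := t
    simpa [numNodes_toBin'] using ht⟩
  invFun b := ⟨.node (ofBin b.1), by
    obtain ⟨b, hb⟩ := b
    rw [← numNodes_toBin', toBin_ofBin]
    exact hb⟩
  left_inv t := by
    obtain ⟨⟨cs⟩, ht⟩ := t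
    simp [ofBin_toBin]
  right_inv b := by
    obtain ⟨b, hb⟩ := b
    simp [toBin_ofBin]

lemma card_trees (s : ℕ) : Nat.card {t : PlaneTree // t.numEdges = s} = catalan s := by
  rw [Nat.card_congr (treeEquivBin s),
    Nat.card_congr (Equiv.subtypeEquivRight fun x => (BinaryTree.mem_treesOfNumNodesEq).symm),
    Nat.card_eq_fintype_card, Fintype.card_coe, BinaryTree.treesOfNumNodesEq_card_eq_catalan]

lemma fin_sum_getD {n : ℕ} (l : List ℕ) (h : l.length = n) :
    ∑ j : Fin n, l.getD j 0 = l.sum := by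
  subst h
  rw [← List.sum_ofFn (f := fun j : Fin l.length => l.getD j 0)]
  congr 1
  have : (fun j : Fin l.length => l.getD j 0) = l.get := by
    funext j
    simp [List.getD_eq_getElem l 0 j.2]
  rw [this, List.ofFn_get]

lemma code_length (t : PlaneTree) : (forestCode [t]).length = t.numEdges + 1 := by
  rw [forestCode_length]; simp

lemma code_sum (t : PlaneTree) : (forestCode [t]).sum = t.numEdges := by
  rw [forestCode_sum]; simp

lemma code_exists_big {d₀ : ℕ} {t : PlaneTree} (hbad : ¬ t.childrenLE d₀) {s : ℕ}
    (hs : t.numEdges = s) :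
    ∃ i : Fin (s + 1), d₀ + 1 ≤ (forestCode [t]).getD i 0 := by
  have hlen : (forestCode [t]).length = s + 1 := by rw [code_length, hs]
  have : ¬ ∀ a ∈ forestCode [t], a ≤ d₀ := fun H =>
    hbad ((forestCode_bounded d₀ [t]).2 H t (List.mem_singleton_self t))
  push_neg at this
  obtain ⟨a, ha, hda⟩ := this
  obtain ⟨k, hk, rfl⟩ := List.mem_iff_getElem.1 ha
  refine ⟨⟨k, by omega⟩, ?_⟩
  rw [List.getD_eq_getElem _ _ (by omega : (k : ℕ) < (forestCode [t]).length)]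
  omega

lemma card_bad_le (s d₀ : ℕ) :
    Nat.card {t : PlaneTree // t.numEdges = s ∧ ¬ t.childrenLE d₀} ≤
      (s + 1) * ((s + 1) + (s - (d₀ + 1)) - 1).choose (s - (d₀ + 1)) := by
  set m := s - (d₀ + 1) with hm
  set target := Fin (s + 1) × Sym (Fin (s + 1)) m with htarget
  -- the modified multiset associated to a bad tree and an index
  let msof : List ℕ → Fin (s + 1) → Multiset (Fin (s + 1)) := fun l i =>
    ∑ j : Fin (s + 1), Multiset.replicate (if j = i then l.getD j 0 - (d₀ + 1) else l.getD j 0) j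
  have count_msof : ∀ (l : List ℕ) (i j : Fin (s + 1)),
      (msof l i).count j = if j = i then l.getD j 0 - (d₀ + 1) else l.getD j 0 := by
    intro l i j
    rw [Multiset.count_sum']
    simp only [Multiset.count_replicate]
    rw [Finset.sum_eq_single j]
    · simp
    · intro b _ hbj
      simp [hbj]
    · simp
  have card_msof : ∀ (l : List ℕ) (i : Fin (s + 1)), l.length = s + 1 → l.sum = s →
      d₀ + 1 ≤ l.getD i 0 → Multiset.card (msof l i) = m := by
    intro l i hlen hsum hbig
    rw [show msof l i = ∑ j : Fin (s + 1), Multiset.replicate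
      (if j = i then l.getD j 0 - (d₀ + 1) else l.getD j 0) j from rfl, Multiset.card_sum]
    simp only [Multiset.card_replicate]
    have hsplit := Finset.add_sum_erase Finset.univ
      (fun j : Fin (s + 1) => if j = i then l.getD j 0 - (d₀ + 1) else l.getD j 0)
      (Finset.mem_univ i)
    have hsplit' := Finset.add_sum_erase Finset.univ
      (fun j : Fin (s + 1) => l.getD j 0) (Finset.mem_univ i)
    have hcongr : ∑ j ∈ Finset.univ.erase i,
        (if j = i then l.getD j 0 - (d₀ + 1) else l.getD j 0) =
        ∑ j ∈ Finset.univ.erase i, l.getD j 0 := by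
      refine Finset.sum_congr rfl fun j hj => ?_
      rw [if_neg (Finset.ne_of_mem_erase hj)]
    have hfull : ∑ j : Fin (s + 1), l.getD j 0 = s := by
      rw [fin_sum_getD l hlen, hsum]
    rw [← hsplit, hcongr, if_pos rfl]
    omega
  classical
  have hfin : Finite target := by infer_instance
  -- build the injection
  let Bad := {t : PlaneTree // t.numEdges = s ∧ ¬ t.childrenLE d₀}
  let idx : Bad → Fin (s + 1) := fun T => Classical.choose (code_exists_big T.2.2 T.2.1)
  have hidx : ∀ T : Bad, d₀ + 1 ≤ (forestCode [T.1]).getD (idx T) 0 := fun T =>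
    Classical.choose_spec (code_exists_big T.2.2 T.2.1)
  let f : Bad → target := fun T =>
    ⟨idx T, ⟨msof (forestCode [T.1]) (idx T),
      card_msof _ (idx T) (by rw [code_length, T.2.1]) (by rw [code_sum, T.2.1]) (hidx T)⟩⟩
  have hf : Function.Injective f := by
    intro T T' h
    have hi : idx T = idx T' := congrArg Prod.fst h
    have hms : msof (forestCode [T.1]) (idx T) = msof (forestCode [T'.1]) (idx T') :=
      congrArg (fun p : target => (p.2 : Multiset (Fin (s + 1)))) h
    have hcount : ∀ j : Fin (s + 1),
        (forestCode [T.1]).getD j 0 = (forestCode [T'.1]).getD j 0 := by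
      intro j
      have := congrArg (Multiset.count j) hms
      rw [count_msof, count_msof, ← hi] at this
      have h1 := hidx T
      have h2 := hidx T'
      rw [← hi] at h2
      by_cases hj : j = idx T
      · rw [if_pos hj, if_pos hj] at this
        subst hj
        omega
      · rwa [if_neg hj, if_neg hj] at this
    have hlen1 : (forestCode [T.1]).length = s + 1 := by rw [code_length, T.2.1]
    have hlen2 : (forestCode [T'.1]).length = s + 1 := by rw [code_length, T'.2.1]
    have hll : forestCode [T.1] = forestCode [T'.1] := by
      apply List.ext_getElem (by omega)
      intro n h1 h2
      have := hcount ⟨n, by omega⟩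
      rwa [List.getD_eq_getElem _ _ h1, List.getD_eq_getElem _ _ h2] at this
    have := forestCode_append_inj [T.1] [T'.1] [] [] rfl (by simpa using hll)
    exact Subtype.ext (by simpa using this.1)
  calc Nat.card {t : PlaneTree // t.numEdges = s ∧ ¬ t.childrenLE d₀}
      ≤ Nat.card target := Nat.card_le_card_of_injective f hf
    _ = (s + 1) * ((s + 1) + m - 1).choose m := by
        rw [htarget, Nat.card_eq_fintype_card, Fintype.card_prod, Fintype.card_fin,
          Sym.card_sym_eq_choose, Fintype.card_fin]

lemma finite_trees (s : ℕ) : Finite {t : PlaneTree // t.numEdges = s} := by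
  have : Finite {b : Tree Unit // b ∈ Tree.treesOfNumNodesEq s} := inferInstance
  have h2 : Finite {b : Tree Unit // b.numNodes = s} :=
    Finite.of_equiv _ (Equiv.subtypeEquivRight fun x => BinaryTree.mem_treesOfNumNodesEq)
  exact Finite.of_equiv _ (treeEquivBin s).symm

lemma card_split (s d₀ : ℕ) :
    Nat.card {t : PlaneTree // t.numEdges = s ∧ t.childrenLE d₀} +
      Nat.card {t : PlaneTree // t.numEdges = s ∧ ¬ t.childrenLE d₀} = catalan s := by
  classical
  have := finite_trees s
  rw [← card_trees s]
  have e1 := Equiv.subtypeSubtypeEquivSubtypeInter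
    (fun t : PlaneTree => t.numEdges = s) (fun t => t.childrenLE d₀)
  have e2 := Equiv.subtypeSubtypeEquivSubtypeInter
    (fun t : PlaneTree => t.numEdges = s) (fun t => ¬ t.childrenLE d₀)
  rw [← Nat.card_congr e1, ← Nat.card_congr e2, ← Nat.card_sum]
  exact Nat.card_congr (Equiv.sumCompl fun x : {t : PlaneTree // t.numEdges = s} =>
    x.1.childrenLE d₀)

lemma choose_step (m s : ℕ) (hs : 1 ≤ s) (h2 : m + 1 ≤ 2 * s) :
    2 * m.choose s ≤ (m + 1).choose s := by
  rcases lt_or_ge m s with hlt | hge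
  · simp [Nat.choose_eq_zero_of_lt hlt]
  · obtain ⟨s', rfl⟩ : ∃ s', s = s' + 1 := ⟨s - 1, by omega⟩
    rw [Nat.choose_succ_succ]
    simp only [Nat.succ_eq_add_one]
    set a := m - (s' + 1) with ha
    have hsymm1 : m.choose (s' + 1) = m.choose a := by
      rw [ha, Nat.choose_symm hge]
    have hsymm2 : m.choose s' = m.choose (a + 1) := by
      have : m - s' = a + 1 := by omega
      rw [← this, Nat.choose_symm (by omega)]
    have hstep : m.choose a ≤ m.choose (a + 1) := by
      have hid := Nat.choose_succ_right_eq m a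
      have hma : a + 1 ≤ m - a := by omega
      have : m.choose a * (a + 1) ≤ m.choose a * (m - a) :=
        Nat.mul_le_mul_left _ hma
      rw [← hid] at this
      exact Nat.le_of_mul_le_mul_right this (by omega)
    omega

lemma pow_mul_choose_le (s : ℕ) (hs : 1 ≤ s) :
    ∀ k, k ≤ s → 2 ^ k * (2 * s - k).choose s ≤ (2 * s).choose s := by
  intro k
  induction k with
  | zero => simp
  | succ k ih =>
    intro hk
    calc 2 ^ (k + 1) * (2 * s - (k + 1)).choose s
        = 2 ^ k * (2 * (2 * s - (k + 1)).choose s) := by ring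
      _ ≤ 2 ^ k * ((2 * s - (k + 1) + 1).choose s) :=
          Nat.mul_le_mul_left _ (choose_step _ _ hs (by omega))
      _ = 2 ^ k * ((2 * s - k).choose s) := by congr 2; omega
      _ ≤ _ := ih (by omega)

lemma catalan_real (s : ℕ) :
    (catalan s : ℝ) = ((2 * s).factorial : ℝ) / ((s.factorial : ℝ) * ((s + 1).factorial : ℝ)) := by
  have h1 : ((s : ℝ) + 1) * (catalan s : ℝ) = ((2 * s).choose s : ℝ) := by
    exact_mod_cast congrArg (Nat.cast (R := ℝ)) (succ_mul_catalan_eq_centralBinom s)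
  have h2 : (((2 * s).choose s : ℕ) : ℝ) * (s.factorial : ℝ) * (s.factorial : ℝ) =
      ((2 * s).factorial : ℝ) := by
    have := Nat.choose_mul_factorial_mul_factorial (by omega : s ≤ 2 * s)
    have h3 : 2 * s - s = s := by omega
    rw [h3] at this
    exact_mod_cast congrArg (Nat.cast (R := ℝ)) this
  have hfac : ((s + 1).factorial : ℝ) = ((s : ℝ) + 1) * (s.factorial : ℝ) := by
    rw [Nat.factorial_succ]; push_cast; ring
  rw [eq_div_iff (by positivity), hfac]
  linear_combination ((s.factorial : ℝ) * (s.factorial : ℝ)) * h1 + h2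

lemma exp_eq_pow (d₀ : ℕ) (hd₀ : 2 < d₀) :
    Real.exp (-((d₀ : ℝ) - 2) * Real.log (4 / 3)) = (3 / 4 : ℝ) ^ (d₀ - 2) := by
  have h43 : (0 : ℝ) < 4 / 3 := by norm_num
  have hcast : ((d₀ : ℝ) - 2) = ((d₀ - 2 : ℕ) : ℝ) := by
    rw [Nat.cast_sub (by omega)]; norm_num
  rw [hcast]
  calc Real.exp (-((d₀ - 2 : ℕ) : ℝ) * Real.log (4 / 3))
      = (4 / 3 : ℝ) ^ (-((d₀ - 2 : ℕ) : ℝ)) := by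
        rw [Real.rpow_def_of_pos h43]; ring_nf
    _ = ((4 / 3 : ℝ) ^ (((d₀ - 2 : ℕ) : ℝ)))⁻¹ := Real.rpow_neg h43.le _
    _ = ((4 / 3 : ℝ) ^ (d₀ - 2 : ℕ))⁻¹ := by rw [Real.rpow_natCast]
    _ = (3 / 4 : ℝ) ^ (d₀ - 2 : ℕ) := by rw [← inv_pow]; norm_num

theorem card_bounded_degree_trees_lower_bound (s d₀ : ℕ) (hd₀ : 2 < d₀) :
    (1 - (2 * (s : ℝ) + 1) * Real.exp (-((d₀ : ℝ) - 2) * Real.log (4 / 3))) *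
        (((2 * s).factorial : ℝ) / ((s.factorial : ℝ) * ((s + 1).factorial : ℝ))) ≤
      (Nat.card {t : PlaneTree // t.numEdges = s ∧ t.childrenLE d₀} : ℝ) := by
  set k := d₀ - 2 with hkdef
  set K : ℝ := ((2 * s).factorial : ℝ) / ((s.factorial : ℝ) * ((s + 1).factorial : ℝ)) with hK
  set G := Nat.card {t : PlaneTree // t.numEdges = s ∧ t.childrenLE d₀} with hG
  set B := Nat.card {t : PlaneTree // t.numEdges = s ∧ ¬ t.childrenLE d₀} with hB
  have hsplit : G + B = catalan s := card_split s d₀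
  have hKpos : 0 ≤ K := by positivity
  rw [exp_eq_pow d₀ hd₀]
  set x : ℝ := (3 / 4 : ℝ) ^ k with hx
  have hx0 : 0 < x := by positivity
  have hcat : (catalan s : ℝ) = K := catalan_real s
  rcases le_or_gt 1 ((2 * (s : ℝ) + 1) * x) with hcase | hcase
  · have h0 : (1 - (2 * (s : ℝ) + 1) * x) ≤ 0 := by linarith
    calc (1 - (2 * (s : ℝ) + 1) * x) * K ≤ 0 := mul_nonpos_of_nonpos_of_nonneg h0 hKpos
      _ ≤ (G : ℝ) := Nat.cast_nonneg _
  rcases lt_or_ge s (d₀ + 1) with hds | hds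
  · -- small s : no bad trees
    have hempty : IsEmpty {t : PlaneTree // t.numEdges = s ∧ ¬ t.childrenLE d₀} := by
      refine ⟨fun T => T.2.2 ?_⟩
      have hall : ∀ a ∈ forestCode [T.1], a ≤ d₀ := by
        intro a ha
        have h1 : a ≤ (forestCode [T.1]).sum :=
          List.single_le_sum (fun _ _ => Nat.zero_le _) a ha
        rw [code_sum, T.2.1] at h1
        omega
      exact (forestCode_bounded d₀ [T.1]).2 hall T.1 (List.mem_singleton_self _)
    have hB0 : B = 0 := by rw [hB, Nat.card_eq_zero]; exact Or.inl hempty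
    have hGc : (G : ℝ) = K := by
      rw [← hcat]; exact_mod_cast congrArg (Nat.cast (R := ℝ)) (by omega : G = catalan s)
    rw [hGc]
    nlinarith [mul_nonneg (by positivity : (0:ℝ) ≤ 2 * (s:ℝ) + 1) hx0.le]
  · -- main case
    have hs1 : 1 ≤ s := by omega
    have hk1 : d₀ + 1 = k + 3 := by omega
    set c1 := (2 * s - (d₀ + 1)).choose s with hc1
    have hBn : B ≤ (s + 1) * c1 := by
      have h := card_bad_le s d₀
      have e1 : (s + 1) + (s - (d₀ + 1)) - 1 = 2 * s - (d₀ + 1) := by omega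
      rw [e1] at h
      have e2 : (2 * s - (d₀ + 1)) - s = s - (d₀ + 1) := by omega
      rw [← e2, Nat.choose_symm (by omega)] at h
      exact h
    have hPn : 2 ^ (d₀ + 1) * c1 ≤ (2 * s).choose s :=
      pow_mul_choose_le s hs1 (d₀ + 1) (by omega)
    have hq : (((2 * s).choose s : ℕ) : ℝ) = ((s : ℝ) + 1) * K := by
      rw [← hcat]
      exact_mod_cast (congrArg (Nat.cast (R := ℝ)) (succ_mul_catalan_eq_centralBinom s)).symm
    -- cast to ℝ
    have hBR : (B : ℝ) ≤ ((s : ℝ) + 1) * (c1 : ℝ) := by exact_mod_cast hBn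
    have hPR : (2 : ℝ) ^ (d₀ + 1) * (c1 : ℝ) ≤ ((s : ℝ) + 1) * K := by
      rw [← hq]; exact_mod_cast hPn
    set P : ℝ := (2 : ℝ) ^ (d₀ + 1) with hP
    have hpow_id : x * P = 8 * (3 / 2 : ℝ) ^ k := by
      rw [hx, hP, hk1, pow_add, ← mul_assoc, ← mul_pow]; norm_num; ring
    have h2s : (2 * (s : ℝ) + 1) < (4 / 3 : ℝ) ^ k := by
      have hmul : (3 / 4 : ℝ) ^ k * (4 / 3 : ℝ) ^ k = 1 := by
        rw [← mul_pow]; norm_num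
      nlinarith
    have h32 : (4 / 3 : ℝ) ^ k ≤ (3 / 2 : ℝ) ^ k :=
      pow_le_pow_left₀ (by norm_num) (by norm_num) k
    have h2pos : (0 : ℝ) < P := by rw [hP]; positivity
    have hneed : ((s : ℝ) + 1) ^ 2 ≤ (2 * (s : ℝ) + 1) * x * P := by
      rw [mul_assoc, hpow_id]
      nlinarith [h2s, h32, pow_pos (by norm_num : (0:ℝ) < 3/2) k, sq_nonneg ((s : ℝ) + 1)]
    have hBK : (B : ℝ) ≤ (2 * (s : ℝ) + 1) * x * K := by
      have hstep1 : (B : ℝ) * P ≤ (((s : ℝ) + 1) * (c1 : ℝ)) * P :=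
        mul_le_mul_of_nonneg_right hBR h2pos.le
      have hstep2 : ((s : ℝ) + 1) * (P * (c1 : ℝ)) ≤ ((s : ℝ) + 1) * (((s : ℝ) + 1) * K) :=
        mul_le_mul_of_nonneg_left hPR (by positivity)
      have hstep3 : ((s : ℝ) + 1) ^ 2 * K ≤ ((2 * (s : ℝ) + 1) * x * P) * K :=
        mul_le_mul_of_nonneg_right hneed hKpos
      have hfin : (B : ℝ) * P ≤ ((2 * (s : ℝ) + 1) * x * K) * P := by nlinarith
      exact le_of_mul_le_mul_right hfin h2pos
    have hGR : (G : ℝ) = K - (B : ℝ) := by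
      have : (G : ℝ) + (B : ℝ) = (catalan s : ℝ) := by exact_mod_cast hsplit
      linarith [hcat ▸ this]
    rw [hGR]
    have hexp : (1 - (2 * (s : ℝ) + 1) * x) * K = K - (2 * (s : ℝ) + 1) * x * K := by ring
    rw [hexp]
    linarith
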